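/- On the second branch boundary Γ₁₃, the two adjacent branch expressions of the Hashin–Shtrikman correction coincide: if v ∈ [0,1], t ∈ [0,1], s = √(1 − t²) and v·Δμ·s = d₃(v)·t, then v·(1−v)·(Δκ·t − Δμ·s)² / d₁(v) = (1−v)·(v·Δμ²·s² / d₃(v) − Δκ·t²), and both are equal to Δμ²·v·(1−v)·s²·d₁(v) / d₃(v)². -/

import Mathlib

/-- On the branch boundary `Γ₁₃` (where `v·Δμ·s = d₃(v)·t`), the first- and
third-branch expressions of the Hashin–Shtrikman correction coincide, and both
equal `Δμ²·v·(1−v)·s²·d₁(v) / d₃(v)²`. -/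
theorem hs_branch_boundary_gamma13
    (κm κp μm μp : ℝ) (hκm : 0 < κm) (hκ : κm < κp) (hμm : 0 < μm) (hμ : μm < μp)
    (v : ℝ) (hv : v ∈ Set.Icc (0 : ℝ) 1) (t : ℝ) (ht : t ∈ Set.Icc (0 : ℝ) 1)
    (s : ℝ) (hs : s = Real.sqrt (1 - t ^ 2))
    (hΓ : v * (μp - μm) * s = (κp + μp - (μp - μm) * v) * t) :
    v * (1 - v) * ((κp - κm) * t - (μp - μm) * s) ^ 2 /
        (κp + μp - ((κp - κm) + (μp - μm)) * v) =
      (1 - v) * (v * (μp - μm) ^ 2 * s ^ 2 / (κp + μp - (μp - μm) * v)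
        - (κp - κm) * t ^ 2) ∧
    v * (1 - v) * ((κp - κm) * t - (μp - μm) * s) ^ 2 /
        (κp + μp - ((κp - κm) + (μp - μm)) * v) =
      (μp - μm) ^ 2 * v * (1 - v) * s ^ 2 *
        (κp + μp - ((κp - κm) + (μp - μm)) * v) / (κp + μp - (μp - μm) * v) ^ 2 := by
  obtain ⟨hv0, hv1⟩ := hv
  have hd1 : (0:ℝ) < κp + μp - ((κp - κm) + (μp - μm)) * v := by nlinarith
  have hd3 : (0:ℝ) < κp + μp - (μp - μm) * v := by nlinarith
  have hd3sq : ((κp + μp - (μp - μm) * v) ^ 2 : ℝ) ≠ 0 := pow_ne_zero _ hd3.ne'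
  constructor
  · rw [show (1 - v) * (v * (μp - μm) ^ 2 * s ^ 2 / (κp + μp - (μp - μm) * v)
        - (κp - κm) * t ^ 2) =
        (1 - v) * (v * (μp - μm) ^ 2 * s ^ 2
          - (κp - κm) * t ^ 2 * (κp + μp - (μp - μm) * v)) /
          (κp + μp - (μp - μm) * v) from by
          rw [eq_div_iff hd3.ne', mul_assoc, sub_mul (c := κp + μp - (μp - μm) * v),
            div_mul_cancel₀ _ hd3.ne']]
    rw [div_eq_div_iff hd1.ne' hd3.ne']
    linear_combination ((1 - v) * (κp - κm) *
      (v * (μp - μm) * s - (κp + μp - (μp - μm) * v) * t)) * hΓ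
  · rw [div_eq_div_iff hd1.ne' hd3sq]
    linear_combination ((1 - v) * v * (κp - κm) *
      (2 * (μp - μm) * s * (κp + μp - (μp - μm) * v) -
        (κp - κm) * (t * (κp + μp - (μp - μm) * v) + v * (μp - μm) * s))) * hΓ
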